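/- Let W be a real symmetric N×N matrix with −I_N ≺ W ⪯ I_N, let H̃ be a symmetric positive semidefinite Nm×Nm matrix, and let α > 0. Then the matrix (W + I_N)² ⊗ I_m − 2α H̃ is positive definite if and only if α < 1/(2 λ_max(((I_N + W)⁻² ⊗ I_m) H̃)). -/

import Mathlib

open Matrix Kronecker

section Aux

variable {n : Type*} [Fintype n] [DecidableEq n]

lemma auxConj {X B : Matrix n n ℝ} (hX : X.PosDef) (hB : IsUnit B) :
    (Bᴴ * X * B).PosDef := by
  refine Matrix.PosDef.of_dotProduct_mulVec_pos (Matrix.isHermitian_conjTranspose_mul_mul B hX.1) fun x hx => ?_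
  have hinj := Matrix.mulVec_injective_iff_isUnit.mpr hB
  have hBx : B *ᵥ x ≠ 0 := fun h => hx (by simpa using hinj (h.trans (Matrix.mulVec_zero B).symm))
  have key : star x ⬝ᵥ ((Bᴴ * X * B) *ᵥ x) = star (B *ᵥ x) ⬝ᵥ (X *ᵥ (B *ᵥ x)) := by
    rw [← Matrix.mulVec_mulVec, ← Matrix.mulVec_mulVec, Matrix.dotProduct_mulVec,
      ← Matrix.star_mulVec]
  rw [key]
  exact hX.dotProduct_mulVec_pos hBx

lemma auxConjIff {X B : Matrix n n ℝ} (hB : IsUnit B) :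
    (Bᴴ * X * B).PosDef ↔ X.PosDef := by
  refine ⟨fun h => ?_, fun h => auxConj h hB⟩
  have hdet : IsUnit B.det := (Matrix.isUnit_iff_isUnit_det B).mp hB
  have h2 := auxConj h ((Matrix.isUnit_nonsing_inv_iff).mpr hB)
  have heq : (B⁻¹)ᴴ * (Bᴴ * X * B) * B⁻¹ = X := by
    rw [Matrix.conjTranspose_nonsing_inv]
    calc (Bᴴ)⁻¹ * (Bᴴ * X * B) * B⁻¹
        = (Bᴴ)⁻¹ * Bᴴ * X * (B * B⁻¹) := by noncomm_ring
      _ = X := by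
          rw [Matrix.nonsing_inv_mul _ (by simpa using hdet), Matrix.mul_nonsing_inv _ hdet,
            one_mul, mul_one]
  rwa [heq] at h2

lemma auxPosDefSpectrum {X : Matrix n n ℝ} (hX : X.IsHermitian) :
    X.PosDef ↔ ∀ μ ∈ spectrum ℝ X, 0 < μ := by
  constructor
  · intro hpd μ hμ
    rw [hX.spectrum_real_eq_range_eigenvalues] at hμ
    obtain ⟨i, rfl⟩ := hμ
    exact hpd.eigenvalues_pos i
  · intro h
    have heig : ∀ i, 0 < hX.eigenvalues i := fun i =>
      h _ (hX.eigenvalues_mem_spectrum_real i)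
    have hdiag : (Matrix.diagonal (RCLike.ofReal ∘ hX.eigenvalues) : Matrix n n ℝ).PosDef := by
      rw [Matrix.posDef_diagonal_iff]
      intro i
      simpa using heig i
    set U := (hX.eigenvectorUnitary : Matrix n n ℝ) with hU
    have h1 : star U * U = 1 := Matrix.mem_unitaryGroup_iff'.mp hX.eigenvectorUnitary.2
    have h2 : U * star U = 1 := Matrix.mem_unitaryGroup_iff.mp hX.eigenvectorUnitary.2
    have hUunit : IsUnit (star U) := ⟨⟨star U, U, h1, h2⟩, rfl⟩
    have hrw : X = (star U)ᴴ * Matrix.diagonal (RCLike.ofReal ∘ hX.eigenvalues) * (star U) := by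
      rw [← Matrix.star_eq_conjTranspose, star_star]
      exact hX.spectral_theorem
    rw [hrw]
    exact auxConj hdiag hUunit

set_option linter.unusedSectionVars false in
lemma auxKroneckerOnePosDef {p : Type*} [Fintype p] [DecidableEq p]
    {M : Matrix n n ℝ} (hM : M.PosDef) :
    (M ⊗ₖ (1 : Matrix p p ℝ)).PosDef := by
  refine Matrix.PosDef.of_dotProduct_mulVec_pos ?_ ?_
  · ext ⟨i, k⟩ ⟨j, l⟩
    have hh := hM.1
    rw [Matrix.IsHermitian] at hh
    have hij : M j i = M i j := by
      conv_lhs => rw [← hh]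
      simp [Matrix.conjTranspose_apply]
    simp [Matrix.conjTranspose_apply, Matrix.one_apply, hij]
    by_cases h : k = l <;> simp [h, eq_comm]
  · intro x hx
    have key : star x ⬝ᵥ ((M ⊗ₖ (1 : Matrix p p ℝ)) *ᵥ x)
        = ∑ k : p, (star fun i => x (i, k)) ⬝ᵥ (M *ᵥ fun i => x (i, k)) := by
      simp only [Matrix.mulVec, dotProduct, Fintype.sum_prod_type,
        Matrix.kroneckerMap_apply, Matrix.one_apply, star_trivial, mul_ite, mul_one, mul_zero,
        ite_mul, zero_mul]
      rw [Finset.sum_comm]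
      congr 1
      ext k
      congr 1
      ext i
      rw [Finset.sum_comm]
      simp [Finset.mul_sum]
    rw [key]
    obtain ⟨⟨i0, k0⟩, h0⟩ := Function.ne_iff.mp hx
    refine Finset.sum_pos' (fun k _ => hM.posSemidef.dotProduct_mulVec_nonneg _) ⟨k0, Finset.mem_univ _, ?_⟩
    refine hM.dotProduct_mulVec_pos (fun hz => h0 ?_)
    simpa using congrFun hz i0

end Aux

/-- `(W+I)²⊗I_m − 2αH̃` is positive definite iff
`2α·λ_max(((I+W)⁻²⊗I_m)H̃) < 1`, i.e. `α < 1/(2λ_max(((I+W)⁻²⊗I_m)H̃))`. -/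
theorem stmt8 (N m : ℕ) (W : Matrix (Fin N) (Fin N) ℝ) (hsymm : W.IsSymm)
    (hlow : (W + 1).PosDef) (hup : ((1 : Matrix (Fin N) (Fin N) ℝ) - W).PosSemidef)
    (Htil : Matrix (Fin N × Fin m) (Fin N × Fin m) ℝ) (hH : Htil.PosSemidef)
    (α : ℝ) (hα : 0 < α) :
    ((((W + 1) ^ 2) ⊗ₖ (1 : Matrix (Fin m) (Fin m) ℝ)) - (2 * α) • Htil).PosDef ↔
      2 * α * sSup (spectrum ℝ
        (((((1 : Matrix (Fin N) (Fin N) ℝ) + W) ^ 2)⁻¹ ⊗ₖ (1 : Matrix (Fin m) (Fin m) ℝ)) * Htil)) < 1 := by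
  classical
  set c : ℝ := 2 * α with hc_def
  have hc : 0 < c := by positivity
  set A : Matrix (Fin N × Fin m) (Fin N × Fin m) ℝ :=
    ((W + 1) ^ 2) ⊗ₖ (1 : Matrix (Fin m) (Fin m) ℝ) with hAdef
  have hW2 : ((W + 1) ^ 2).PosDef := by
    have h : (W + 1) ^ 2 = (W + 1)ᴴ * 1 * (W + 1) := by
      rw [mul_one, pow_two, hlow.1.eq]
    rw [h]
    exact auxConj Matrix.PosDef.one hlow.isUnit
  have hA : A.PosDef := auxKroneckerOnePosDef hW2
  have hAinv : ((((1 : Matrix (Fin N) (Fin N) ℝ) + W) ^ 2)⁻¹ ⊗ₖ (1 : Matrix (Fin m) (Fin m) ℝ))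
      = A⁻¹ := by
    rw [add_comm (1 : Matrix (Fin N) (Fin N) ℝ) W, hAdef, Matrix.inv_kronecker, inv_one]
  rw [hAinv]
  by_cases hempty : IsEmpty (Fin N × Fin m)
  · have hspec : spectrum ℝ (A⁻¹ * Htil) = ∅ :=
      Set.eq_empty_of_forall_notMem fun μ hμ =>
        (spectrum.mem_iff.mp hμ) (isUnit_of_subsingleton _)
    constructor
    · intro _
      rw [hspec, Real.sSup_empty, mul_zero]
      norm_num
    · intro _
      exact ⟨Subsingleton.elim _ _, fun x hxx => absurd (Subsingleton.elim x 0) hxx⟩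
  · have hnonempty : Nonempty (Fin N × Fin m) := not_isEmpty_iff.mp hempty
    set B := (open scoped MatrixOrder in CFC.sqrt A) with hBdef
    have hBpsd : B.PosSemidef := by
      open scoped MatrixOrder in exact Matrix.nonneg_iff_posSemidef.mp (CFC.sqrt_nonneg A)
    have hBB : B * B = A := by
      open scoped MatrixOrder in exact CFC.sqrt_mul_sqrt_self A hA.posSemidef.nonneg
    have hdetB : IsUnit B.det := by
      have hu := (Matrix.isUnit_iff_isUnit_det A).mp hA.isUnit
      rw [← hBB, Matrix.det_mul] at hu
      exact isUnit_of_mul_isUnit_left hu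
    have hBunit : IsUnit B := (Matrix.isUnit_iff_isUnit_det B).mpr hdetB
    have hBH : Bᴴ = B := hBpsd.1
    have hBinvH : (B⁻¹)ᴴ = B⁻¹ := by rw [Matrix.conjTranspose_nonsing_inv, hBH]
    set Mt := B⁻¹ * Htil * B⁻¹ with hMdef
    have hMpsd : Mt.PosSemidef := by
      have h := hH.conjTranspose_mul_mul_same (B := B⁻¹)
      rwa [hBinvH] at h
    have hMherm : Mt.IsHermitian := hMpsd.1
    have hid : A - c • Htil = Bᴴ * ((1 : Matrix (Fin N × Fin m) (Fin N × Fin m) ℝ) - c • Mt) * B := by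
      rw [hBH, hMdef]
      have e1 : B * ((1 : Matrix (Fin N × Fin m) (Fin N × Fin m) ℝ) - c • (B⁻¹ * Htil * B⁻¹)) * B
          = B * B - c • ((B * B⁻¹) * Htil * (B⁻¹ * B)) := by
        rw [Matrix.mul_sub, Matrix.sub_mul, mul_one, Matrix.mul_smul, Matrix.smul_mul]
        noncomm_ring
      rw [e1, hBB, Matrix.mul_nonsing_inv _ hdetB, Matrix.nonsing_inv_mul _ hdetB,
        one_mul, mul_one]
    have hspec : spectrum ℝ (A⁻¹ * Htil) = spectrum ℝ Mt := by
      obtain ⟨u, hu⟩ := hBunit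
      have huinv : (↑u⁻¹ : Matrix (Fin N × Fin m) (Fin N × Fin m) ℝ) = B⁻¹ := by
        rw [← hu]; exact Matrix.coe_units_inv u
      have he : A⁻¹ * Htil = (↑u⁻¹ : Matrix (Fin N × Fin m) (Fin N × Fin m) ℝ) * Mt
          * (↑u : Matrix (Fin N × Fin m) (Fin N × Fin m) ℝ) := by
        rw [huinv, hu, hMdef, ← hBB, Matrix.mul_inv_rev]
        have e2 : B⁻¹ * (B⁻¹ * Htil * B⁻¹) * B = B⁻¹ * B⁻¹ * Htil * (B⁻¹ * B) := by
          noncomm_ring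
        rw [e2, Matrix.nonsing_inv_mul _ hdetB, mul_one]
      rw [he, spectrum.units_conjugate']
    rw [hspec]
    have hfin : (spectrum ℝ Mt).Finite := Mt.finite_real_spectrum
    have hnespec : (spectrum ℝ Mt).Nonempty := by
      rw [hMherm.spectrum_real_eq_range_eigenvalues]
      exact Set.range_nonempty _
    have h1cM : ((1 : Matrix (Fin N × Fin m) (Fin N × Fin m) ℝ) - c • Mt).IsHermitian := by
      rw [Matrix.IsHermitian, Matrix.conjTranspose_sub, Matrix.conjTranspose_smul,
        Matrix.conjTranspose_one, hMherm.eq, star_trivial]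
    have hsm : spectrum ℝ ((1 : Matrix (Fin N × Fin m) (Fin N × Fin m) ℝ) - c • Mt)
        = (fun μ => 1 - c * μ) '' spectrum ℝ Mt := by
      have e3 : ((1 : Matrix (Fin N × Fin m) (Fin N × Fin m) ℝ) - c • Mt)
          = algebraMap ℝ (Matrix (Fin N × Fin m) (Fin N × Fin m) ℝ) 1 - c • Mt := by
        simp
      rw [e3, ← spectrum.singleton_sub_eq, spectrum.smul_eq_smul c Mt hnespec]
      ext ν
      simp only [Set.mem_sub, Set.mem_singleton_iff, Set.mem_smul_set, Set.mem_image,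
        smul_eq_mul]
      constructor
      · rintro ⟨x, rfl, ⟨y, ⟨μ, hμ, rfl⟩, rfl⟩⟩
        exact ⟨μ, hμ, rfl⟩
      · rintro ⟨μ, hμ, rfl⟩
        exact ⟨1, rfl, ⟨c * μ, ⟨μ, hμ, rfl⟩, rfl⟩⟩
    have hPD : (A - c • Htil).PosDef ↔ ∀ μ ∈ spectrum ℝ Mt, c * μ < 1 := by
      rw [hid, auxConjIff hBunit, auxPosDefSpectrum h1cM, hsm]
      constructor
      · intro h μ hμ
        have h2 : 0 < 1 - c * μ := h _ ⟨μ, hμ, rfl⟩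
        linarith
      · rintro h ν ⟨μ, hμ, rfl⟩
        have h2 := h μ hμ
        show 0 < 1 - c * μ
        linarith
    rw [hPD]
    constructor
    · intro h
      exact h _ (hnespec.csSup_mem hfin)
    · intro h μ hμ
      have h1 : μ ≤ sSup (spectrum ℝ Mt) := le_csSup hfin.bddAbove hμ
      calc c * μ ≤ c * sSup (spectrum ℝ Mt) := by nlinarith
        _ < 1 := h
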